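/- Let k ≥ 1 and let y be a k×k real symmetric positive-definite matrix with eigenvalues λ₁, …, λ_k (necessarily all positive). If (Σ_{i=1}^{k} (log λ_i)²)^{1/2} ≤ r for some r > 0, then ‖y − I_k‖_F ≤ e^r − 1, where ‖·‖_F denotes the Frobenius norm and I_k the identity matrix. -/

import Mathlib

open Matrix in
/-- Frobenius sum of squares of `y - 1` equals the sum of `(λᵢ - 1)²`. -/
lemma frob_sum_eq_eigen_sum (k : ℕ) (y : Matrix (Fin k) (Fin k) ℝ)
    (hsymm : y.IsHermitian) :
    ∑ i, ∑ j, (y i j - (1 : Matrix (Fin k) (Fin k) ℝ) i j) ^ 2 =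
      ∑ i, (hsymm.eigenvalues i - 1) ^ 2 := by
  classical
  set U : Matrix (Fin k) (Fin k) ℝ := (hsymm.eigenvectorUnitary : Matrix (Fin k) (Fin k) ℝ)
    with hUdef
  have hU1 : U * star U = 1 := (Matrix.mem_unitaryGroup_iff).mp hsymm.eigenvectorUnitary.2
  have hU2 : star U * U = 1 := (Matrix.mem_unitaryGroup_iff').mp hsymm.eigenvectorUnitary.2
  have hspec : y = U * Matrix.diagonal hsymm.eigenvalues * star U := by
    have := hsymm.spectral_theorem
    simpa using this
  set M : Matrix (Fin k) (Fin k) ℝ := y - 1 with hMdef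
  have hMsymm : ∀ i j, M j i = M i j := by
    intro i j
    have hy : y j i = y i j := by
      have := congrFun (congrFun hsymm i) j
      simpa using this
    by_cases h : i = j
    · subst h; rfl
    · simp [hMdef, Matrix.sub_apply, Matrix.one_apply, hy, h, Ne.symm h]
  have hM : M = U * Matrix.diagonal (fun i => hsymm.eigenvalues i - 1) * star U := by
    have hdiag : Matrix.diagonal (fun i => hsymm.eigenvalues i - 1) =
        Matrix.diagonal hsymm.eigenvalues - 1 := by
      rw [← Matrix.diagonal_one, Matrix.diagonal_sub]
    rw [hMdef, hdiag, Matrix.mul_sub, Matrix.sub_mul, mul_one, hU1, ← hspec]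
  have htr : ∑ i, ∑ j, (M i j) ^ 2 = Matrix.trace (M * M) := by
    rw [Matrix.trace]
    apply Finset.sum_congr rfl
    intro i _
    rw [Matrix.diag_apply, Matrix.mul_apply]
    apply Finset.sum_congr rfl
    intro j _
    rw [hMsymm i j, sq]
  have hMM : M * M = U * Matrix.diagonal (fun i => (hsymm.eigenvalues i - 1) ^ 2) * star U := by
    rw [hM]
    have : Matrix.diagonal (fun i => hsymm.eigenvalues i - 1) * star U *
        (U * Matrix.diagonal (fun i => hsymm.eigenvalues i - 1)) =
        Matrix.diagonal (fun i => (hsymm.eigenvalues i - 1) ^ 2) := by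
      rw [mul_assoc, ← mul_assoc (star U), hU2, one_mul, Matrix.diagonal_mul_diagonal]
      simp only [sq]
    calc U * Matrix.diagonal (fun i => hsymm.eigenvalues i - 1) * star U *
          (U * Matrix.diagonal (fun i => hsymm.eigenvalues i - 1) * star U)
        = U * (Matrix.diagonal (fun i => hsymm.eigenvalues i - 1) * star U *
          (U * Matrix.diagonal (fun i => hsymm.eigenvalues i - 1))) * star U := by
          noncomm_ring
      _ = U * Matrix.diagonal (fun i => (hsymm.eigenvalues i - 1) ^ 2) * star U := by rw [this]
  have : Matrix.trace (M * M) = ∑ i, (hsymm.eigenvalues i - 1) ^ 2 := by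
    rw [hMM, Matrix.trace_mul_comm, ← mul_assoc, hU2, one_mul, Matrix.trace_diagonal]
  rw [← this, ← htr]
  rfl

/-- Pointwise bound: if `t² ≤ r²` with `r > 0` then `(eᵗ - 1)² ≤ ((eʳ-1)/r)² t²`. -/
lemma exp_sub_one_sq_le (t r : ℝ) (hr : 0 < r) (ht : t ^ 2 ≤ r ^ 2) :
    (Real.exp t - 1) ^ 2 ≤ ((Real.exp r - 1) / r) ^ 2 * t ^ 2 := by
  have htr : |t| ≤ r := by
    rw [← Real.sqrt_sq hr.le, ← Real.sqrt_sq_eq_abs]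
    exact Real.sqrt_le_sqrt ht
  have hrexp : r + 1 ≤ Real.exp r := by
    have := Real.add_one_le_exp r; linarith
  have key : |Real.exp t - 1| ≤ (Real.exp r - 1) / r * |t| := by
    rcases le_or_gt 0 t with h0 | h0
    · -- t ∈ [0, r]
      have htr' : t ≤ r := (le_abs_self t).trans htr
      have ha : (0:ℝ) ≤ 1 - t / r := by
        have : t / r ≤ 1 := (div_le_one hr).mpr htr'; linarith
      have hb : (0:ℝ) ≤ t / r := div_nonneg h0 hr.le
      have hab : (1 - t / r) + t / r = 1 := by ring
      have hconv := convexOn_exp.2 (Set.mem_univ (0 : ℝ)) (Set.mem_univ r) ha hb hab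
      have harg : (1 - t / r) • (0 : ℝ) + (t / r) • r = t := by
        rw [smul_eq_mul, smul_eq_mul, mul_zero, zero_add, div_mul_cancel₀ t hr.ne']
      rw [harg] at hconv
      simp only [smul_eq_mul, Real.exp_zero, mul_one] at hconv
      have h1 : 0 ≤ Real.exp t - 1 := by
        have := Real.one_le_exp h0; linarith
      rw [abs_of_nonneg h1, abs_of_nonneg h0]
      have : Real.exp t ≤ 1 - t / r + t / r * Real.exp r := by linarith
      have h2 : Real.exp t - 1 ≤ t / r * (Real.exp r - 1) := by
        have : t / r * Real.exp r - t / r = t / r * (Real.exp r - 1) := by ring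
        linarith
      calc Real.exp t - 1 ≤ t / r * (Real.exp r - 1) := h2
        _ = (Real.exp r - 1) / r * t := by ring
    · -- t < 0 : |exp t - 1| = 1 - exp t ≤ -t ≤ (exp r - 1)/r * (-t)
      have h1 : Real.exp t < 1 := by
        rw [← Real.exp_zero]; exact Real.exp_lt_exp.mpr h0
      have h2 : 1 - Real.exp t ≤ -t := by
        have := Real.add_one_le_exp t; linarith
      have h3 : (1 : ℝ) ≤ (Real.exp r - 1) / r := by
        rw [le_div_iff₀ hr]; linarith
      rw [abs_of_nonpos (by linarith), abs_of_neg h0]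
      calc -(Real.exp t - 1) = 1 - Real.exp t := by ring
        _ ≤ -t := h2
        _ = 1 * (-t) := by ring
        _ ≤ (Real.exp r - 1) / r * (-t) := by
            apply mul_le_mul_of_nonneg_right h3; linarith
  calc (Real.exp t - 1) ^ 2 = |Real.exp t - 1| ^ 2 := (sq_abs _).symm
    _ ≤ ((Real.exp r - 1) / r * |t|) ^ 2 := by
        apply pow_le_pow_left₀ (abs_nonneg _) key
    _ = ((Real.exp r - 1) / r) ^ 2 * t ^ 2 := by
        rw [mul_pow, sq_abs]

/-- If `y` is a `k×k` real symmetric positive-definite matrix whose eigenvalues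
`λ₁,…,λ_k` satisfy `(Σ (log λ_i)²)^{1/2} ≤ r`, then the Frobenius distance from `y`
to the identity satisfies `‖y − I‖_F ≤ e^r − 1`. -/
theorem spd_log_ball_in_frobenius_ball (k : ℕ) (hk : 1 ≤ k)
    (y : Matrix (Fin k) (Fin k) ℝ) (hsymm : y.IsHermitian) (hpos : y.PosDef)
    (r : ℝ) (hr : 0 < r)
    (hball : Real.sqrt (∑ i, Real.log (hsymm.eigenvalues i) ^ 2) ≤ r) :
    Real.sqrt (∑ i, ∑ j, (y i j - (1 : Matrix (Fin k) (Fin k) ℝ) i j) ^ 2) ≤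
      Real.exp r - 1 := by
  have hlog_nonneg : 0 ≤ ∑ i, Real.log (hsymm.eigenvalues i) ^ 2 :=
    Finset.sum_nonneg fun i _ => sq_nonneg _
  have hsum : ∑ i, Real.log (hsymm.eigenvalues i) ^ 2 ≤ r ^ 2 := by
    have h := Real.sq_sqrt hlog_nonneg
    nlinarith [Real.sqrt_nonneg (∑ i, Real.log (hsymm.eigenvalues i) ^ 2)]
  have hev_pos : ∀ i, 0 < hsymm.eigenvalues i := fun i => hpos.eigenvalues_pos i
  rw [frob_sum_eq_eigen_sum k y hsymm]
  have hterm : ∀ i, (hsymm.eigenvalues i - 1) ^ 2 ≤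
      ((Real.exp r - 1) / r) ^ 2 * Real.log (hsymm.eigenvalues i) ^ 2 := by
    intro i
    have ht : Real.log (hsymm.eigenvalues i) ^ 2 ≤ r ^ 2 := by
      have : Real.log (hsymm.eigenvalues i) ^ 2 ≤
          ∑ j, Real.log (hsymm.eigenvalues j) ^ 2 :=
        Finset.single_le_sum (f := fun j => Real.log (hsymm.eigenvalues j) ^ 2)
          (fun j _ => sq_nonneg _) (Finset.mem_univ i)
      linarith
    have := exp_sub_one_sq_le (Real.log (hsymm.eigenvalues i)) r hr ht
    rwa [Real.exp_log (hev_pos i)] at this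
  have hsum2 : ∑ i, (hsymm.eigenvalues i - 1) ^ 2 ≤ (Real.exp r - 1) ^ 2 := by
    calc ∑ i, (hsymm.eigenvalues i - 1) ^ 2
        ≤ ∑ i, ((Real.exp r - 1) / r) ^ 2 * Real.log (hsymm.eigenvalues i) ^ 2 :=
          Finset.sum_le_sum fun i _ => hterm i
      _ = ((Real.exp r - 1) / r) ^ 2 * ∑ i, Real.log (hsymm.eigenvalues i) ^ 2 := by
          rw [Finset.mul_sum]
      _ ≤ ((Real.exp r - 1) / r) ^ 2 * r ^ 2 :=
          mul_le_mul_of_nonneg_left hsum (sq_nonneg _)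
      _ = (Real.exp r - 1) ^ 2 := by
          field_simp
  have hexp : 0 ≤ Real.exp r - 1 := by
    have := Real.one_le_exp hr.le; linarith
  calc Real.sqrt (∑ i, (hsymm.eigenvalues i - 1) ^ 2)
      ≤ Real.sqrt ((Real.exp r - 1) ^ 2) := Real.sqrt_le_sqrt hsum2
    _ = Real.exp r - 1 := Real.sqrt_sq hexp
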